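/- arXiv:2001.00753 — 3 statements merged into one kernel-verified Lean document; each statement's English description precedes it below -/
import Mathlib

section
/- Let X ⊆ ℝ^m be a closed set and f : X → ℝ^n a Lipschitz map. If the induced pullback map on Lipschitz functions V(f) : V(ℝ^n) → V(X), h ↦ h ∘ f, is surjective, then f(X) is closed and f : X → f(X) is bi-Lipschitz (i.e., f is a bi-Lipschitz embedding). -/
open Metric Set Filter

noncomputable section

abbrev E (n : ℕ) := EuclideanSpace ℝ (Fin n)

/-- Semialgebraic subsets of ℝⁿ: the boolean algebra generated by polynomial
equalities and inequalities. -/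
inductive IsSemialgebraic (n : ℕ) : Set (E n) → Prop
  | zero (p : MvPolynomial (Fin n) ℝ) :
      IsSemialgebraic n {x | MvPolynomial.eval (fun i => x i) p = 0}
  | pos (p : MvPolynomial (Fin n) ℝ) :
      IsSemialgebraic n {x | 0 < MvPolynomial.eval (fun i => x i) p}
  | union {s t : Set (E n)} : IsSemialgebraic n s → IsSemialgebraic n t →
      IsSemialgebraic n (s ∪ t)
  | inter {s t : Set (E n)} : IsSemialgebraic n s → IsSemialgebraic n t →
      IsSemialgebraic n (s ∩ t)
  | compl {s : Set (E n)} : IsSemialgebraic n s → IsSemialgebraic n sᶜ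

/-- A map is semialgebraic on `s` if its graph over `s` is semialgebraic. -/
def IsSemialgebraicOn {m n : ℕ} (f : E m → E n) (s : Set (E m)) : Prop :=
  IsSemialgebraic (m + n)
    {z : E (m + n) | WithLp.toLp 2 (fun i : Fin m => z (Fin.castAdd n i)) ∈ s ∧
      ∀ j : Fin n, f (WithLp.toLp 2 (fun i : Fin m => z (Fin.castAdd n i))) j = z (Fin.natAdd m j)}

/-- A real-valued function on ℝⁿ is semialgebraic if its graph is semialgebraic. -/
def IsSemialgebraicFun (n : ℕ) (p : E n → ℝ) : Prop :=
  IsSemialgebraic (n + 1)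
    {z : E (n + 1) | p (WithLp.toLp 2 (fun i : Fin n => z (Fin.castAdd 1 i))) = z (Fin.natAdd n 0)}

/-- `f` is bi-Lipschitz on `s` (with respect to the outer metrics). -/
def IsBiLipschitzOn {α β : Type*} [PseudoMetricSpace α] [PseudoMetricSpace β]
    (f : α → β) (s : Set α) : Prop :=
  ∃ C : ℝ, 1 ≤ C ∧ ∀ x ∈ s, ∀ y ∈ s,
    dist x y ≤ C * dist (f x) (f y) ∧ dist (f x) (f y) ≤ C * dist x y

/-- A bi-Lipschitz embedding: bi-Lipschitz onto its image, which is closed. -/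
def IsBiLipschitzEmbedding {m n : ℕ} (f : E m → E n) (s : Set (E m)) : Prop :=
  IsBiLipschitzOn f s ∧ IsClosed (f '' s)

/-- A triangular bi-Lipschitz map: `(x₁,…,xₙ) ↦ (x₁,…,x_{n-1}, xₙ + p(x₁,…,x_{n-1}))`
with `p` Lipschitz (i.e. `p` depends only on the first `n-1` coordinates). -/
def IsTriangular (n : ℕ) (F : E n → E n) : Prop :=
  ∃ p : E n → ℝ, (∃ K : NNReal, LipschitzWith K p) ∧
    (∀ x y : E n, (∀ i : Fin n, (i : ℕ) + 1 < n → x i = y i) → p x = p y) ∧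
    ∀ (x : E n) (i : Fin n), F x i = x i + (if (i : ℕ) + 1 = n then p x else 0)

/-- Tame bi-Lipschitz homeomorphisms of ℝⁿ: compositions of triangular maps and
linear maps of determinant one. -/
inductive IsTame (n : ℕ) : (E n → E n) → Prop
  | triangular {F : E n → E n} : IsTriangular n F → IsTame n F
  | linear (A : E n →ₗ[ℝ] E n) (h : LinearMap.det A = 1) : IsTame n (A : E n → E n)
  | comp {F G : E n → E n} : IsTame n F → IsTame n G → IsTame n (F ∘ G)

/-- Triangular maps whose shift function is moreover semialgebraic. -/
def IsTriangularSA (n : ℕ) (F : E n → E n) : Prop :=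
  IsTriangular n F ∧ ∃ p : E n → ℝ, IsSemialgebraicFun n p ∧ (∃ K : NNReal, LipschitzWith K p) ∧
    (∀ x y : E n, (∀ i : Fin n, (i : ℕ) + 1 < n → x i = y i) → p x = p y) ∧
    ∀ (x : E n) (i : Fin n), F x i = x i + (if (i : ℕ) + 1 = n then p x else 0)

/-- Tame semialgebraic bi-Lipschitz homeomorphisms: compositions of semialgebraic
triangular maps and linear maps of determinant one. -/
inductive IsTameSA (n : ℕ) : (E n → E n) → Prop
  | triangular {F : E n → E n} : IsTriangularSA n F → IsTameSA n F
  | linear (A : E n →ₗ[ℝ] E n) (h : LinearMap.det A = 1) : IsTameSA n (A : E n → E n)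
  | comp {F G : E n → E n} : IsTameSA n F → IsTameSA n G → IsTameSA n (F ∘ G)

/-- The projection of ℝⁿ onto the first `l` coordinates, viewed as ℝˡ × {0} ⊆ ℝⁿ. -/
def projE (n l : ℕ) : E n → E n :=
  fun x => WithLp.toLp 2 (fun i : Fin n => if (i : ℕ) < l then x i else 0 : Fin n → ℝ)
lemma sqrt_sum_sq_le_sum {ι : Type*} (s : Finset ι) (g : ι → ℝ) (hg : ∀ i ∈ s, 0 ≤ g i) :
    Real.sqrt (∑ i ∈ s, g i ^ 2) ≤ ∑ i ∈ s, g i := by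
  have h1 : (∑ i ∈ s, g i ^ 2) ≤ (∑ i ∈ s, g i) ^ 2 := by
    rw [sq]
    calc ∑ i ∈ s, g i ^ 2 ≤ ∑ i ∈ s, g i * (∑ j ∈ s, g j) := by
          refine Finset.sum_le_sum fun i hi => ?_
          rw [sq]
          exact mul_le_mul_of_nonneg_left
            (Finset.single_le_sum hg hi) (hg i hi)
      _ = (∑ i ∈ s, g i) * (∑ j ∈ s, g j) := by rw [← Finset.sum_mul]
  calc Real.sqrt (∑ i ∈ s, g i ^ 2) ≤ Real.sqrt ((∑ i ∈ s, g i) ^ 2) :=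
        Real.sqrt_le_sqrt h1
    _ = ∑ i ∈ s, g i := Real.sqrt_sq (Finset.sum_nonneg hg)

lemma coord_lipschitz (m : ℕ) (i : Fin m) :
    LipschitzWith 1 (fun x : E m => x i) := by
  refine LipschitzWith.of_dist_le_mul fun x y => ?_
  rw [NNReal.coe_one, one_mul, EuclideanSpace.dist_eq]
  calc dist (x i) (y i) = Real.sqrt (dist (x i) (y i) ^ 2) :=
        (Real.sqrt_sq dist_nonneg).symm
    _ ≤ Real.sqrt (∑ j, dist (x j) (y j) ^ 2) := by
        apply Real.sqrt_le_sqrt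
        exact Finset.single_le_sum (f := fun j => dist (x j) (y j) ^ 2) (fun j _ => sq_nonneg _) (Finset.mem_univ i)

/-- If the pullback `V(f) : V(ℝⁿ) → V(X)` on Lipschitz functions is surjective,
then `f` is a bi-Lipschitz embedding. -/
theorem stmt_0 (m n : ℕ) (X : Set (E m)) (hX : IsClosed X)
    (f : E m → E n) (hf : ∃ K : NNReal, LipschitzOnWith K f X)
    (hsurj : ∀ g : E m → ℝ, (∃ Kg : NNReal, LipschitzOnWith Kg g X) →
      ∃ h : E n → ℝ, (∃ Kh : NNReal, LipschitzWith Kh h) ∧ ∀ x ∈ X, h (f x) = g x) :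
    IsBiLipschitzEmbedding f X := by
  obtain ⟨Kf, hKf⟩ := hf
  have H : ∀ i : Fin m, ∃ h : E n → ℝ, (∃ Kh : NNReal, LipschitzWith Kh h) ∧
      ∀ x ∈ X, h (f x) = x i := fun i =>
    hsurj (fun x => x i) ⟨1, (LipschitzWith.lipschitzOnWith (coord_lipschitz m i) (s := X))⟩
  choose h hh heq using H
  choose K hK using hh
  set Ksum : NNReal := ∑ i, K i with hKsum
  -- lower bound
  have lower : ∀ x ∈ X, ∀ y ∈ X, dist x y ≤ (Ksum : ℝ) * dist (f x) (f y) := by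
    intro x hx y hy
    rw [EuclideanSpace.dist_eq]
    calc Real.sqrt (∑ i, dist (x i) (y i) ^ 2) ≤ ∑ i, dist (x i) (y i) :=
          sqrt_sum_sq_le_sum _ _ (fun i _ => dist_nonneg)
      _ ≤ ∑ i, (K i : ℝ) * dist (f x) (f y) := by
          refine Finset.sum_le_sum fun i _ => ?_
          have := (hK i).dist_le_mul (f x) (f y)
          rwa [heq i x hx, heq i y hy] at this
      _ = (Ksum : ℝ) * dist (f x) (f y) := by
          rw [← Finset.sum_mul, hKsum, NNReal.coe_sum]
  constructor
  · refine ⟨(Ksum : ℝ) + (Kf : ℝ) + 1, by have := Ksum.coe_nonneg; have := Kf.coe_nonneg; linarith, fun x hx y hy => ?_⟩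
    constructor
    · calc dist x y ≤ (Ksum : ℝ) * dist (f x) (f y) := lower x hx y hy
        _ ≤ ((Ksum : ℝ) + (Kf : ℝ) + 1) * dist (f x) (f y) := by
            apply mul_le_mul_of_nonneg_right _ dist_nonneg
            have : (0:ℝ) ≤ (Kf:ℝ) := Kf.coe_nonneg
            linarith
    · calc dist (f x) (f y) ≤ (Kf : ℝ) * dist x y := hKf.dist_le_mul x hx y hy
        _ ≤ ((Ksum : ℝ) + (Kf : ℝ) + 1) * dist x y := by
            apply mul_le_mul_of_nonneg_right _ dist_nonneg
            have : (0:ℝ) ≤ (Ksum:ℝ) := Ksum.coe_nonneg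
            linarith
  · -- closedness of f '' X
    haveI : CompleteSpace X := hX.completeSpace_coe
    have hanti : AntilipschitzWith Ksum (X.restrict f) := by
      apply AntilipschitzWith.of_le_mul_dist
      intro x y
      exact lower x x.2 y y.2
    have hlip : LipschitzWith Kf (X.restrict f) := LipschitzOnWith.to_restrict hKf
    have := hanti.isClosed_range hlip.uniformContinuous
    exact (show range (X.restrict f) = f '' X from Set.range_restrict f X) ▸ this
end
end

section
/- Let X be a closed subset of ℝ^n such that the projection π : X → ℝ^l × {0}, (x_1,…,x_n) ↦ (x_1,…,x_l,0,…,0), is a bi-Lipschitz embedding. Then there exists a bi-Lipschitz homeomorphism Π : ℝ^n → ℝ^n such that Π restricted to X equals π. Moreover Π can be taken to be a composition of maps of the form (x_1,…,x_n) ↦ (x_1,…,x_{n-1}, x_n + p(x_1,…,x_{n-1})) with p Lipschitz, and volume-preserving linear maps. -/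
open Metric Set Filter

noncomputable section

section AuxStmt2

lemma dist_coord_le {n : ℕ} (x y : E n) (i : Fin n) : dist (x i) (y i) ≤ dist x y := by
  rw [EuclideanSpace.dist_eq, ← Real.sqrt_sq (dist_nonneg (x := x i) (y := y i))]
  exact Real.sqrt_le_sqrt (Finset.single_le_sum
    (f := fun j => dist (x j) (y j) ^ 2) (fun j _ => sq_nonneg _) (Finset.mem_univ i))

lemma projE_lipschitz (n l : ℕ) : LipschitzWith 1 (projE n l) := by
  apply LipschitzWith.of_dist_le_mul
  intro x y
  rw [NNReal.coe_one, one_mul, EuclideanSpace.dist_eq, EuclideanSpace.dist_eq]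
  apply Real.sqrt_le_sqrt
  apply Finset.sum_le_sum
  intro i _
  show dist (if (i:ℕ) < l then x i else 0) (if (i:ℕ) < l then y i else 0) ^ 2 ≤ _
  split_ifs
  · exact le_refl _
  · rw [dist_self]
    simpa using sq_nonneg (dist (x i) (y i))

def triMap (n : ℕ) (q : E n → ℝ) : E n → E n :=
  fun x => WithLp.toLp 2 (fun i : Fin n => x i + (if (i : ℕ) + 1 = n then q x else 0) : Fin n → ℝ)

lemma triMap_apply {n : ℕ} {q : E n → ℝ} {x : E n} {i : Fin n} :
    triMap n q x i = x i + (if (i : ℕ) + 1 = n then q x else 0) := rfl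

lemma triMap_eq {n : ℕ} (hn : 0 < n) (q : E n → ℝ) (x : E n) :
    triMap n q x = x + q x • EuclideanSpace.single (⟨n-1, by omega⟩ : Fin n) (1:ℝ) := by
  ext i
  rw [triMap_apply]
  simp only [PiLp.add_apply, PiLp.smul_apply, EuclideanSpace.single_apply, smul_eq_mul]
  have hiff : ((i:ℕ) + 1 = n) ↔ i = (⟨n-1, by omega⟩ : Fin n) := by
    constructor
    · intro h; have hv : (i:ℕ) = n - 1 := by omega
      exact Fin.ext hv
    · intro h; subst h; show n - 1 + 1 = n; omega
  by_cases h : (i:ℕ) + 1 = n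
  · rw [if_pos h, if_pos (hiff.mp h)]; ring
  · rw [if_neg h, if_neg (fun hh => h (hiff.mpr hh))]; ring

lemma triMap_lip {n : ℕ} (hn : 0 < n) {q : E n → ℝ} {K : NNReal} (hq : LipschitzWith K q)
    (x y : E n) : dist (triMap n q x) (triMap n q y) ≤ (1 + (K:ℝ)) * dist x y := by
  set u : E n := EuclideanSpace.single (⟨n-1, by omega⟩ : Fin n) (1:ℝ) with hu
  rw [triMap_eq hn, triMap_eq hn, dist_eq_norm, ← hu]
  have h1 : (x + q x • u) - (y + q y • u) = (x - y) + (q x - q y) • u := by module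
  rw [h1]
  have h2 : ‖(x - y) + (q x - q y) • u‖ ≤ ‖x - y‖ + |q x - q y| * ‖u‖ := by
    calc ‖(x - y) + (q x - q y) • u‖ ≤ ‖x - y‖ + ‖(q x - q y) • u‖ := norm_add_le _ _
      _ = ‖x - y‖ + |q x - q y| * ‖u‖ := by rw [norm_smul, Real.norm_eq_abs]
  have h3 : ‖u‖ = 1 := by rw [hu, EuclideanSpace.norm_single]; simp
  have h4 : |q x - q y| ≤ (K:ℝ) * dist x y := by
    rw [← Real.dist_eq]; exact hq.dist_le_mul x y
  rw [h3, mul_one] at h2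
  have h5 : ‖x - y‖ = dist x y := (dist_eq_norm x y).symm
  nlinarith [h2, h4, dist_nonneg (x := x) (y := y)]

lemma triMap_comp {n : ℕ} (q r : E n → ℝ)
    (hr : ∀ x y : E n, (∀ i : Fin n, (i:ℕ)+1 < n → x i = y i) → r x = r y)
    (hqr : ∀ x, r x + q x = 0) : ∀ x, triMap n r (triMap n q x) = x := by
  intro x
  have hrq : r (triMap n q x) = r x := by
    apply hr
    intro i hi
    rw [triMap_apply, if_neg (by omega), add_zero]
  ext i
  rw [triMap_apply, triMap_apply, hrq]
  have := hqr x
  split_ifs <;> linarith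

def rotL (n : ℕ) (a b : Fin n) : E n →ₗ[ℝ] E n where
  toFun x := WithLp.toLp 2 (fun i : Fin n => if i = a then -(x b) else if i = b then x a else x i : Fin n → ℝ)
  map_add' x y := by
    ext i
    simp only [PiLp.add_apply, PiLp.toLp_apply]
    split_ifs <;> ring
  map_smul' c x := by
    ext i
    simp only [PiLp.smul_apply, PiLp.toLp_apply, RingHom.id_apply, smul_eq_mul]
    split_ifs <;> ring

lemma rotL_apply {n : ℕ} {a b : Fin n} {x : E n} {i : Fin n} :
    rotL n a b x i = if i = a then -(x b) else if i = b then x a else x i := rfl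

lemma rotL_inv {n : ℕ} {a b : Fin n} (h : a ≠ b) (x : E n) :
    rotL n b a (rotL n a b x) = x := by
  ext i
  rcases eq_or_ne i a with rfl | hia
  · simp [rotL_apply, h, Ne.symm h]
  · rcases eq_or_ne i b with rfl | hib
    · simp [rotL_apply, h, Ne.symm h]
    · simp [rotL_apply, hia, hib]

lemma rotL_dist {n : ℕ} {a b : Fin n} (h : a ≠ b) (x y : E n) :
    dist (rotL n a b x) (rotL n a b y) = dist x y := by
  rw [EuclideanSpace.dist_eq, EuclideanSpace.dist_eq]
  congr 1
  rw [← Equiv.sum_comp (Equiv.swap a b) (fun i => dist (x i) (y i) ^ 2)]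
  apply Finset.sum_congr rfl
  intro i _
  rcases eq_or_ne i a with rfl | hia
  · rw [Equiv.swap_apply_left]
    simp [rotL_apply, dist_neg_neg]
  · rcases eq_or_ne i b with rfl | hib
    · rw [Equiv.swap_apply_right]
      simp [rotL_apply, Ne.symm h]
    · rw [Equiv.swap_apply_of_ne_of_ne hia hib]
      simp [rotL_apply, hia, hib]

def rotHalfL (n : ℕ) (a b : Fin n) : E n →ₗ[ℝ] E n where
  toFun x := WithLp.toLp 2 (fun i : Fin n => if i = a then (x a - x b)/Real.sqrt 2
    else if i = b then (x a + x b)/Real.sqrt 2 else x i : Fin n → ℝ)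
  map_add' x y := by
    ext i
    simp only [PiLp.add_apply, PiLp.toLp_apply]
    split_ifs <;> ring
  map_smul' c x := by
    ext i
    simp only [PiLp.smul_apply, PiLp.toLp_apply, RingHom.id_apply, smul_eq_mul]
    split_ifs <;> ring

lemma rotHalfL_apply {n : ℕ} {a b : Fin n} {x : E n} {i : Fin n} :
    rotHalfL n a b x i = if i = a then (x a - x b)/Real.sqrt 2
    else if i = b then (x a + x b)/Real.sqrt 2 else x i := rfl

lemma rotHalf_sq {n : ℕ} {a b : Fin n} (h : a ≠ b) (x : E n) :
    rotHalfL n a b (rotHalfL n a b x) = rotL n a b x := by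
  have h2 : Real.sqrt 2 ≠ 0 := by positivity
  have h22 : Real.sqrt 2 * Real.sqrt 2 = 2 := Real.mul_self_sqrt (by norm_num)
  ext i
  rcases eq_or_ne i a with rfl | hia
  · rw [rotL_apply, if_pos rfl, rotHalfL_apply, if_pos rfl]
    rw [rotHalfL_apply, if_pos rfl, rotHalfL_apply, if_neg (Ne.symm h), if_pos rfl]
    field_simp
    rw [Real.sq_sqrt (by norm_num : (0:ℝ) ≤ 2)]; ring
  · rcases eq_or_ne i b with rfl | hib
    · rw [rotL_apply, if_neg (Ne.symm h), if_pos rfl, rotHalfL_apply,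
        if_neg (Ne.symm h), if_pos rfl]
      rw [rotHalfL_apply, if_pos rfl, rotHalfL_apply, if_neg (Ne.symm h), if_pos rfl]
      field_simp
      rw [Real.sq_sqrt (by norm_num : (0:ℝ) ≤ 2)]; ring
    · rw [rotL_apply, if_neg hia, if_neg hib, rotHalfL_apply, if_neg hia, if_neg hib]
      rw [rotHalfL_apply, if_neg hia, if_neg hib]

lemma rot_pow4 {n : ℕ} {a b : Fin n} (h : a ≠ b) (x : E n) :
    rotL n a b (rotL n a b (rotL n a b (rotL n a b x))) = x := by
  ext i
  rcases eq_or_ne i a with rfl | hia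
  · simp [rotL_apply, h, Ne.symm h]
  · rcases eq_or_ne i b with rfl | hib
    · simp [rotL_apply, h, Ne.symm h]
    · simp [rotL_apply, hia, hib]

lemma rot_det {n : ℕ} {a b : Fin n} (h : a ≠ b) :
    LinearMap.det (rotL n a b) = 1 := by
  have hBB : (rotHalfL n a b).comp (rotHalfL n a b) = rotL n a b :=
    LinearMap.ext (rotHalf_sq h)
  have h4 : ((rotL n a b).comp ((rotL n a b).comp ((rotL n a b).comp (rotL n a b))))
      = LinearMap.id := LinearMap.ext (rot_pow4 h)
  have hd4 := congrArg LinearMap.det h4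
  rw [LinearMap.det_comp, LinearMap.det_comp, LinearMap.det_comp, LinearMap.det_id] at hd4
  have hpos : 0 ≤ LinearMap.det (rotL n a b) := by
    rw [← hBB, LinearMap.det_comp]
    exact mul_self_nonneg _
  set d := LinearMap.det (rotL n a b) with hd
  have hd4' : d ^ 4 = 1 := by linear_combination hd4
  rcases lt_trichotomy d 1 with hlt | heq | hgt
  · have := pow_lt_one₀ hpos hlt (n := 4) (by norm_num)
    linarith
  · exact heq
  · have := one_lt_pow₀ hgt (n := 4) (by norm_num)
    linarith

lemma bilip_id {n : ℕ} : IsBiLipschitzOn (id : E n → E n) univ :=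
  ⟨1, le_refl 1, fun x _ y _ => by simp⟩

lemma bilip_comp {n : ℕ} {f g : E n → E n} (hf : IsBiLipschitzOn f univ)
    (hg : IsBiLipschitzOn g univ) : IsBiLipschitzOn (f ∘ g) univ := by
  obtain ⟨Cf, hCf, hf⟩ := hf
  obtain ⟨Cg, hCg, hg⟩ := hg
  refine ⟨Cf * Cg, by nlinarith, fun x _ y _ => ?_⟩
  obtain ⟨hg1, hg2⟩ := hg x (mem_univ x) y (mem_univ y)
  obtain ⟨hf1, hf2⟩ := hf (g x) (mem_univ _) (g y) (mem_univ _)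
  have d1 : (0:ℝ) ≤ dist (f (g x)) (f (g y)) := dist_nonneg
  have d2 : (0:ℝ) ≤ dist (g x) (g y) := dist_nonneg
  have d3 : (0:ℝ) ≤ dist x y := dist_nonneg
  constructor
  · calc dist x y ≤ Cg * dist (g x) (g y) := hg1
      _ ≤ Cg * (Cf * dist (f (g x)) (f (g y))) := by nlinarith
      _ = Cf * Cg * dist ((f ∘ g) x) ((f ∘ g) y) := by
          simp only [Function.comp_apply]; ring
  · calc dist ((f ∘ g) x) ((f ∘ g) y) = dist (f (g x)) (f (g y)) := rfl
      _ ≤ Cf * dist (g x) (g y) := hf2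
      _ ≤ Cf * (Cg * dist x y) := by nlinarith
      _ = Cf * Cg * dist x y := by ring

lemma step_exists (n l m : ℕ) (hlm : l ≤ m) (hmn : m < n) (ψ : E n → ℝ) (K : NNReal)
    (hψ : LipschitzWith K ψ) :
    ∃ F : E n → E n, IsTame n F ∧ Function.Bijective F ∧
      IsBiLipschitzOn F (univ : Set (E n)) ∧
      (∀ (x : E n) (i : Fin n), (i : ℕ) ≠ m → F x i = x i) ∧
      (∀ x : E n, F x ⟨m, hmn⟩ = x ⟨m, hmn⟩ - ψ (projE n l x)) := by
  have hn : 0 < n := by omega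
  set q : E n → ℝ := fun y => -(ψ (projE n l y)) with hqdef
  set q' : E n → ℝ := fun y => ψ (projE n l y) with hq'def
  have hq'lip : LipschitzWith K q' := by
    have := hψ.comp (projE_lipschitz n l)
    rwa [mul_one] at this
  have hqlip : LipschitzWith K q := hq'lip.neg
  have hproj_inv : ∀ x y : E n, (∀ i : Fin n, (i:ℕ)+1 < n → x i = y i) →
      projE n l x = projE n l y := by
    intro x y hxy
    ext i
    show (if (i:ℕ) < l then x i else 0) = (if (i:ℕ) < l then y i else 0)
    split_ifs with h
    · exact hxy i (by omega)
    · rfl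
  have hqinv : ∀ x y : E n, (∀ i : Fin n, (i:ℕ)+1 < n → x i = y i) → q x = q y :=
    fun x y hxy => by simp only [hqdef]; rw [hproj_inv x y hxy]
  have hq'inv : ∀ x y : E n, (∀ i : Fin n, (i:ℕ)+1 < n → x i = y i) → q' x = q' y :=
    fun x y hxy => by simp only [hq'def]; rw [hproj_inv x y hxy]
  have htri : IsTriangular n (triMap n q) := ⟨q, ⟨K, hqlip⟩, hqinv, fun x i => triMap_apply⟩
  have hinvL : ∀ x, triMap n q' (triMap n q x) = x :=
    triMap_comp q q' hq'inv (fun x => by simp only [hqdef, hq'def]; ring)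
  have hinvR : ∀ x, triMap n q (triMap n q' x) = x :=
    triMap_comp q' q hqinv (fun x => by simp only [hqdef, hq'def]; ring)
  have hTbij : Function.Bijective (triMap n q) :=
    ⟨Function.LeftInverse.injective hinvL, Function.RightInverse.surjective hinvR⟩
  have hTbilip : IsBiLipschitzOn (triMap n q) (univ : Set (E n)) := by
    refine ⟨1 + (K:ℝ), le_add_of_nonneg_right K.coe_nonneg, fun x _ y _ =>
      ⟨?_, triMap_lip hn hqlip x y⟩⟩
    calc dist x y = dist (triMap n q' (triMap n q x)) (triMap n q' (triMap n q y)) := by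
          rw [hinvL, hinvL]
      _ ≤ (1 + (K:ℝ)) * dist (triMap n q x) (triMap n q y) := triMap_lip hn hq'lip _ _
  by_cases hm : m = n - 1
  · refine ⟨triMap n q, IsTame.triangular htri, hTbij, hTbilip, ?_, ?_⟩
    · intro x i hi
      rw [triMap_apply, if_neg (by omega), add_zero]
    · intro x
      rw [triMap_apply, if_pos (by show m + 1 = n; omega)]
      simp only [hqdef]
      ring
  · have hmn1 : m < n - 1 := by omega
    set mm : Fin n := ⟨m, hmn⟩ with hmm
    set nn : Fin n := ⟨n - 1, by omega⟩ with hnn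
    have hmmv : (mm:ℕ) = m := rfl
    have hnnv : (nn:ℕ) = n - 1 := rfl
    have hab : mm ≠ nn := by
      intro hh
      have := congrArg Fin.val hh
      rw [hmmv, hnnv] at this
      omega
    set A := rotL n mm nn with hA
    set Ai := rotL n nn mm with hAi
    have hAinvL : ∀ x, Ai (A x) = x := fun x => rotL_inv hab x
    have hAinvR : ∀ x, A (Ai x) = x := fun x => rotL_inv (Ne.symm hab) x
    set F : E n → E n := fun x => Ai (triMap n q (A x)) with hF
    have hprojA : ∀ x, projE n l (A x) = projE n l x := by
      intro x
      ext i
      show (if (i:ℕ) < l then A x i else 0) = (if (i:ℕ) < l then x i else 0)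
      split_ifs with h
      · have h1 : i ≠ mm := by
          intro hh
          rw [hh, hmmv] at h
          omega
        have h2 : i ≠ nn := by
          intro hh
          rw [hh, hnnv] at h
          omega
        rw [hA, rotL_apply, if_neg h1, if_neg h2]
      · rfl
    have hqA : ∀ x, q (A x) = -(ψ (projE n l x)) := by
      intro x
      simp only [hqdef]
      rw [hprojA x]
    have hcoords : ∀ (x : E n) (i : Fin n), (i:ℕ) ≠ m → F x i = x i := by
      intro x i hi
      have him : i ≠ mm := by
        intro hh
        rw [hh, hmmv] at hi
        exact hi rfl
      rcases eq_or_ne i nn with rfl | hin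
      · simp only [hF]
        rw [hAi, rotL_apply, if_pos rfl]
        rw [triMap_apply, if_neg (by rw [hmmv]; omega), add_zero]
        rw [hA, rotL_apply, if_pos rfl, neg_neg]
      · have hlt := i.isLt
        have hin' : (i:ℕ) ≠ n - 1 := fun hh => hin (Fin.ext hh)
        simp only [hF]
        rw [hAi, rotL_apply, if_neg hin, if_neg him]
        rw [triMap_apply, if_neg (by omega), add_zero]
        rw [hA, rotL_apply, if_neg him, if_neg hin]
    have hcoordm : ∀ x : E n, F x mm = x mm - ψ (projE n l x) := by
      intro x
      simp only [hF]
      rw [hAi, rotL_apply, if_neg hab, if_pos rfl]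
      rw [triMap_apply, if_pos (by rw [hnnv]; omega)]
      rw [hA, rotL_apply, if_neg (Ne.symm hab), if_pos rfl]
      rw [hqA x]
      ring
    have hFtame : IsTame n F := by
      have : IsTame n (⇑Ai ∘ (triMap n q ∘ ⇑A)) :=
        IsTame.comp (IsTame.linear Ai (rot_det (Ne.symm hab)))
          (IsTame.comp (IsTame.triangular htri) (IsTame.linear A (rot_det hab)))
      exact this
    have hFbij : Function.Bijective F := by
      set G : E n → E n := fun x => Ai (triMap n q' (A x)) with hG
      have hGF : ∀ x, G (F x) = x := by
        intro x
        simp only [hF, hG]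
        rw [hAinvR, hinvL, hAinvL]
      have hFG : ∀ x, F (G x) = x := by
        intro x
        simp only [hF, hG]
        rw [hAinvR, hinvR, hAinvL]
      exact ⟨Function.LeftInverse.injective hGF, Function.RightInverse.surjective hFG⟩
    have hAbilip : IsBiLipschitzOn (⇑A) (univ : Set (E n)) := by
      refine ⟨1, le_refl 1, fun x _ y _ => ?_⟩
      rw [hA, rotL_dist hab, one_mul]
      exact ⟨le_refl _, le_refl _⟩
    have hAibilip : IsBiLipschitzOn (⇑Ai) (univ : Set (E n)) := by
      refine ⟨1, le_refl 1, fun x _ y _ => ?_⟩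
      rw [hAi, rotL_dist (Ne.symm hab), one_mul]
      exact ⟨le_refl _, le_refl _⟩
    have hFbilip : IsBiLipschitzOn F (univ : Set (E n)) := by
      have : IsBiLipschitzOn (⇑Ai ∘ (triMap n q ∘ ⇑A)) (univ : Set (E n)) :=
        bilip_comp hAibilip (bilip_comp hTbilip hAbilip)
      exact this
    exact ⟨F, hFtame, hFbij, hFbilip, hcoords, hcoordm⟩

end AuxStmt2

/-- If the coordinate projection onto ℝˡ × {0} is a bi-Lipschitz embedding of the
closed set `X`, then it extends to a tame bi-Lipschitz homeomorphism of ℝⁿ. -/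
theorem stmt_2 (n l : ℕ) (X : Set (E n)) (hX : IsClosed X)
    (hemb : IsBiLipschitzEmbedding (projE n l) X) :
    ∃ P : E n → E n, IsTame n P ∧ Function.Bijective P ∧
      IsBiLipschitzOn P (univ : Set (E n)) ∧ Set.EqOn P (projE n l) X := by
  classical
  obtain ⟨⟨C, hC1, hC⟩, hclosed⟩ := hemb
  have hCpos : (0:ℝ) ≤ C := by linarith
  have hCcoe : ((C.toNNReal : NNReal) : ℝ) = C := Real.coe_toNNReal C hCpos
  have hψ : ∀ j : Fin n, ∃ ψ : E n → ℝ, LipschitzWith C.toNNReal ψ ∧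
      ∀ x ∈ X, ψ (projE n l x) = x j := by
    intro j
    set S := projE n l '' X with hS
    set φ : E n → ℝ := fun y => if h : y ∈ S then h.choose j else 0 with hφ
    have hφspec : ∀ y (h : y ∈ S), h.choose ∈ X ∧ projE n l h.choose = y :=
      fun y h => h.choose_spec
    have hlip : LipschitzOnWith C.toNNReal φ S := by
      apply LipschitzOnWith.of_dist_le_mul
      intro y1 h1 y2 h2
      obtain ⟨hx1, hp1⟩ := hφspec y1 h1
      obtain ⟨hx2, hp2⟩ := hφspec y2 h2
      simp only [hφ]
      rw [dif_pos h1, dif_pos h2, hCcoe]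
      calc dist (h1.choose j) (h2.choose j) ≤ dist h1.choose h2.choose :=
            dist_coord_le _ _ _
        _ ≤ C * dist (projE n l h1.choose) (projE n l h2.choose) := (hC _ hx1 _ hx2).1
        _ = C * dist y1 y2 := by rw [hp1, hp2]
    obtain ⟨ψ, hψlip, hψeq⟩ := hlip.extend_real
    refine ⟨ψ, hψlip, fun x hx => ?_⟩
    have hmem : projE n l x ∈ S := mem_image_of_mem _ hx
    obtain ⟨hx', hp'⟩ := hφspec _ hmem
    have hxx : hmem.choose = x := by
      have hd := (hC _ hx' _ hx).1
      rw [hp'] at hd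
      simp only [dist_self, mul_zero] at hd
      exact dist_le_zero.mp hd
    rw [← hψeq hmem]
    simp only [hφ]
    rw [dif_pos hmem, hxx]
  choose ψf hψlip hψeq using hψ
  have key : ∀ m : ℕ, m ≤ n → ∃ P : E n → E n, IsTame n P ∧ Function.Bijective P ∧
      IsBiLipschitzOn P (univ : Set (E n)) ∧
      (∀ (x : E n) (i : Fin n), ((i:ℕ) < l ∨ m ≤ (i:ℕ)) → P x i = x i) ∧
      (∀ x ∈ X, ∀ i : Fin n, l ≤ (i:ℕ) → (i:ℕ) < m → P x i = 0) := by
    intro m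
    induction m with
    | zero =>
      intro _
      refine ⟨id, ?_, Function.bijective_id, bilip_id, fun x i _ => rfl,
        fun x _ i _ h => by omega⟩
      have : IsTame n (⇑(LinearMap.id : E n →ₗ[ℝ] E n)) := IsTame.linear _ LinearMap.det_id
      simpa using this
    | succ m ih =>
      intro hm1
      obtain ⟨P, hPt, hPb, hPl, hP1, hP2⟩ := ih (by omega)
      by_cases hlm : m < l
      · exact ⟨P, hPt, hPb, hPl, fun x i hi => hP1 x i (by omega),
          fun x hx i hi1 hi2 => by omega⟩
      · push_neg at hlm
        have hmn : m < n := by omega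
        obtain ⟨F, hFt, hFb, hFl, hF1, hF2⟩ := step_exists n l m hlm hmn
          (ψf ⟨m, hmn⟩) C.toNNReal (hψlip _)
        refine ⟨F ∘ P, IsTame.comp hFt hPt, hFb.comp hPb, bilip_comp hFl hPl, ?_, ?_⟩
        · intro x i hi
          show F (P x) i = x i
          rw [hF1 _ _ (by omega), hP1 x i (by omega)]
        · intro x hx i hil him
          show F (P x) i = 0
          by_cases him : (i:ℕ) = m
          · have hieq : i = (⟨m, hmn⟩ : Fin n) := Fin.ext him
            rw [hieq, hF2]
            have hPm : P x ⟨m, hmn⟩ = x ⟨m, hmn⟩ := hP1 x _ (Or.inr (le_refl m))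
            have hproj : projE n l (P x) = projE n l x := by
              ext j
              show (if (j:ℕ) < l then P x j else 0) = (if (j:ℕ) < l then x j else 0)
              split_ifs with h
              · exact hP1 x j (Or.inl h)
              · rfl
            rw [hPm, hproj, hψeq _ x hx]
            ring
          · rw [hF1 _ _ him, hP2 x hx i hil (by omega)]
  obtain ⟨P, hPt, hPb, hPl, hP1, hP2⟩ := key n (le_refl n)
  refine ⟨P, hPt, hPb, hPl, fun x hx => ?_⟩
  ext i
  show P x i = (if (i:ℕ) < l then x i else 0)
  by_cases h : (i:ℕ) < l
  · rw [if_pos h, hP1 x i (Or.inl h)]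
  · rw [if_neg h, hP2 x hx i (by omega) i.isLt]
end
end

section
/- Let X ⊆ ℝ^n and Y ⊆ ℝ^n be closed sets contained in linear subspaces L^s and H^{n−s} respectively, of dimensions s and n−s. Then every bi-Lipschitz homeomorphism f : X → Y extends to a tame bi-Lipschitz homeomorphism F : ℝ^n → ℝ^n with F|_X = f. -/
open Metric Set Filter

noncomputable section

section Helpers

variable {n : ℕ}

lemma tame_congr {F G : E n → E n} (h : IsTame n G) (e : ∀ x, F x = G x) : IsTame n F := by
  have : F = G := funext e
  rwa [this]

lemma tame_id : IsTame n (fun x : E n => x) := by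
  refine IsTame.triangular ⟨0, ⟨0, LipschitzWith.const' 0⟩, fun _ _ _ => rfl, fun x i => ?_⟩
  simp

lemma det_symm (P : E n ≃ₗ[ℝ] E n) (h : LinearMap.det (P : E n →ₗ[ℝ] E n) = 1) :
    LinearMap.det (P.symm : E n →ₗ[ℝ] E n) = 1 := by
  have : (P.symm : E n →ₗ[ℝ] E n) ∘ₗ (P : E n →ₗ[ℝ] E n) = LinearMap.id := by
    ext x; simp
  have h2 := congrArg LinearMap.det this
  rw [LinearMap.det_comp, h, mul_one, LinearMap.det_id] at h2
  exact h2

lemma linear_lips (A : E n →ₗ[ℝ] E n) : ∃ K : NNReal, LipschitzWith K A := by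
  refine ⟨‖LinearMap.toContinuousLinearMap A‖₊, ?_⟩
  exact (LinearMap.toContinuousLinearMap A).lipschitz

lemma eval_lips (i : Fin n) : LipschitzWith 1 (fun x : E n => x i) := by
  intro x y
  rw [edist_nndist, edist_nndist, ENNReal.coe_one, one_mul, ENNReal.coe_le_coe,
    ← NNReal.coe_le_coe, coe_nndist, coe_nndist, EuclideanSpace.dist_eq]
  have h1 : dist (x i) (y i) = Real.sqrt (dist (x i) (y i) ^ 2) := by
    rw [Real.sqrt_sq dist_nonneg]
  rw [h1]
  apply Real.sqrt_le_sqrt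
  exact Finset.single_le_sum (f := fun j => dist (x j) (y j) ^ 2)
    (fun j _ => sq_nonneg _) (Finset.mem_univ i)

/-- componentwise Lipschitz implies Lipschitz into E n -/
lemma lipschitz_of_coords (φ : E n → E n) (h : ∀ i, ∃ K : NNReal, LipschitzWith K (fun x => φ x i)) :
    ∃ K : NNReal, LipschitzWith K φ := by
  choose K hK using h
  refine ⟨⟨Real.sqrt (∑ i, (K i : ℝ)^2), Real.sqrt_nonneg _⟩, ?_⟩
  apply LipschitzWith.of_dist_le_mul
  intro x y
  rw [EuclideanSpace.dist_eq]
  have hb : ∀ i : Fin n, dist (φ x i) (φ y i) ^ 2 ≤ (K i : ℝ)^2 * dist x y ^ 2 := by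
    intro i
    have := (hK i).dist_le_mul x y
    rw [← mul_pow]
    exact pow_le_pow_left₀ dist_nonneg this 2
  calc Real.sqrt (∑ i, dist (φ x i) (φ y i) ^ 2)
      ≤ Real.sqrt (∑ i, (K i : ℝ)^2 * dist x y ^ 2) := by
        apply Real.sqrt_le_sqrt; exact Finset.sum_le_sum fun i _ => hb i
    _ = Real.sqrt ((∑ i, (K i:ℝ)^2) * dist x y ^ 2) := by rw [← Finset.sum_mul]
    _ ≤ Real.sqrt (∑ i, (K i:ℝ)^2) * dist x y := by
        rw [Real.sqrt_mul (Finset.sum_nonneg fun i _ => sq_nonneg _), Real.sqrt_sq dist_nonneg]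

/-- coordinate projection -/
def projC (c : Fin n → Prop) [DecidablePred c] : E n → E n :=
  fun x => (WithLp.toLp 2 (fun i => if c i then x i else 0) : E n)

lemma projC_lips (c : Fin n → Prop) [DecidablePred c] :
    ∃ K : NNReal, LipschitzWith K (projC c) := by
  apply lipschitz_of_coords
  intro i
  by_cases h : c i
  · exact ⟨1, by simpa [projC, h] using eval_lips (n := n) i⟩
  · exact ⟨0, by simpa [projC, h] using LipschitzWith.const' (0:ℝ) (K := 0)⟩

lemma projC_eq_self {c : Fin n → Prop} [DecidablePred c] {x : E n}
    (h : ∀ i, ¬ c i → x i = 0) : projC c x = x := by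
  ext i
  by_cases hi : c i <;> simp [projC, hi]
  exact (h i hi).symm

end Helpers
section Shear

variable {n : ℕ}

/-- signed swap of coordinates j and l -/
def swapNeg (j l : Fin n) (h : j ≠ l) : E n ≃ₗ[ℝ] E n where
  toFun x := (WithLp.toLp 2 (fun i => if i = j then x l else if i = l then -x j else x i) : E n)
  invFun x := (WithLp.toLp 2 (fun i => if i = j then -x l else if i = l then x j else x i) : E n)
  map_add' x y := by
    ext i
    simp only [PiLp.add_apply]
    split_ifs <;> ring
  map_smul' c x := by
    ext i
    simp only [PiLp.smul_apply, RingHom.id_apply, smul_eq_mul]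
    split_ifs <;> ring
  left_inv x := by
    ext i
    by_cases h1 : i = j
    · subst h1; simp [h.symm]
    · by_cases h2 : i = l
      · subst h2; simp [h1]
      · simp [h1, h2]
  right_inv x := by
    ext i
    by_cases h1 : i = j
    · subst h1; simp [h.symm]
    · by_cases h2 : i = l
      · subst h2; simp [h1]
      · simp [h1, h2]

@[simp] lemma swapNeg_apply (j l : Fin n) (h : j ≠ l) (x : E n) (i : Fin n) :
    swapNeg j l h x i = if i = j then x l else if i = l then -x j else x i := rfl

@[simp] lemma swapNeg_symm_apply (j l : Fin n) (h : j ≠ l) (x : E n) (i : Fin n) :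
    (swapNeg j l h).symm x i = if i = j then -x l else if i = l then x j else x i := rfl

lemma det_swapNeg (j l : Fin n) (h : j ≠ l) :
    LinearMap.det ((swapNeg j l h : E n ≃ₗ[ℝ] E n) : E n →ₗ[ℝ] E n) = 1 := by
  classical
  set b := PiLp.basisFun 2 ℝ (Fin n) with hb
  rw [← LinearMap.det_toMatrix b]
  set d : Fin n → ℝ := fun i => if i = j then -1 else 1 with hd
  have hM : LinearMap.toMatrix b b ((swapNeg j l h : E n ≃ₗ[ℝ] E n) : E n →ₗ[ℝ] E n)
      = (Matrix.diagonal d).submatrix (Equiv.swap j l) id := by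
    ext i k
    rw [LinearMap.toMatrix_apply]
    have hbk : ∀ m : Fin n, b k m = if m = k then 1 else 0 := by
      intro m
      simp [hb, PiLp.basisFun_apply, Pi.single_apply]
    have hrepr : ∀ z : E n, b.repr z i = z i := by
      intro z; simp [hb]
    rw [hrepr]
    simp only [LinearEquiv.coe_coe, swapNeg_apply, Matrix.submatrix_apply, id_eq]
    by_cases h1 : i = j
    · subst h1
      rw [if_pos rfl, Equiv.swap_apply_left, hbk, Matrix.diagonal_apply]
      by_cases hk : l = k
      · subst hk; simp [hd, Ne.symm h]
      · simp [hk]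
    · by_cases h2 : i = l
      · subst h2
        rw [if_neg h1, if_pos rfl, Equiv.swap_apply_right, hbk, Matrix.diagonal_apply]
        by_cases hk : j = k <;> simp [hk, hd]
      · rw [if_neg h1, if_neg h2, Equiv.swap_apply_of_ne_of_ne h1 h2, hbk,
          Matrix.diagonal_apply]
        by_cases hk : i = k
        · subst hk; simp [hd, h1]
        · simp [hk]
  rw [hM, Matrix.det_permute, Matrix.det_diagonal, hd]
  rw [Equiv.Perm.sign_swap h]
  rw [Finset.prod_ite_eq' Finset.univ j (fun _ => (-1 : ℝ))]
  simp

lemma lips_neg {f : E n → ℝ} {K : NNReal} (hf : LipschitzWith K f) :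
    LipschitzWith K (fun x => -f x) := by
  intro x y
  simpa [edist_dist, dist_neg_neg] using hf x y

lemma tame_single_shear (j : Fin n) (p : E n → ℝ) (hp : ∃ K : NNReal, LipschitzWith K p)
    (hinv : ∀ x y : E n, (∀ i, i ≠ j → x i = y i) → p x = p y) :
    IsTame n (fun x => (WithLp.toLp 2 (fun i => x i + if i = j then p x else 0) : E n)) := by
  classical
  by_cases hj : (j : ℕ) + 1 = n
  · apply IsTame.triangular
    refine ⟨p, hp, ?_, ?_⟩
    · intro x y hxy
      apply hinv
      intro i hi
      apply hxy
      have hiv : (i : ℕ) ≠ (j : ℕ) := fun hc => hi (Fin.ext hc)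
      have := i.isLt
      omega
    · intro x i
      by_cases hij : i = j
      · subst hij; simp [hj]
      · have h2 : ¬ ((i : ℕ) + 1 = n) := by
          intro hc
          exact hij (Fin.ext (by omega))
        simp [hij, h2]
  · have hjn : (j : ℕ) + 1 < n := lt_of_le_of_ne j.isLt hj
    have hn : 0 < n := by omega
    have hl' : n - 1 < n := by omega
    set l : Fin n := ⟨n - 1, hl'⟩ with hl
    have hjl : j ≠ l := by
      intro he
      apply hj
      have hje : (j : ℕ) = n - 1 := by rw [he]
      omega
    have hTt : IsTame n (fun x => (WithLp.toLp 2 (fun i => x i +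
        if i = l then -p ((swapNeg j l hjl).symm x) else 0) : E n)) := by
      apply IsTame.triangular
      refine ⟨fun y => -p ((swapNeg j l hjl).symm y), ?_, ?_, ?_⟩
      · obtain ⟨K, hK⟩ := hp
        obtain ⟨Ks, hKs⟩ := linear_lips (((swapNeg j l hjl).symm : E n ≃ₗ[ℝ] E n) : E n →ₗ[ℝ] E n)
        exact ⟨K * Ks, lips_neg (hK.comp hKs)⟩
      · intro x y hxy
        simp only [neg_inj]
        apply hinv
        intro i hi
        simp only [swapNeg_symm_apply]
        by_cases h2 : i = l
        · subst h2
          rw [if_neg hjl.symm, if_pos rfl, if_neg hjl.symm, if_pos rfl]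
          exact hxy j (by omega)
        · rw [if_neg hi, if_neg h2, if_neg hi, if_neg h2]
          have h3 : (i : ℕ) + 1 < n := by
            have h4 := i.isLt
            have h5 : (i : ℕ) ≠ n - 1 := fun hc => h2 (Fin.ext (by rw [hc]))
            omega
          exact hxy i h3
      · intro x i
        dsimp only
        have hlv : ((⟨n - 1, hl'⟩ : Fin n) : ℕ) = n - 1 := rfl
        by_cases hil : i = l
        · subst hil
          rw [if_pos rfl, if_pos (show ((l : Fin n) : ℕ) + 1 = n by rw [hl, hlv]; omega)]
        · have h2 : ¬ ((i : ℕ) + 1 = n) := by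
            intro hc
            refine hil (Fin.ext ?_)
            rw [hl, hlv]
            omega
          rw [if_neg hil, if_neg h2]
    have hc : IsTame n (⇑(((swapNeg j l hjl).symm : E n ≃ₗ[ℝ] E n) : E n →ₗ[ℝ] E n) ∘
        ((fun x => (WithLp.toLp 2 (fun i => x i + if i = l then -p ((swapNeg j l hjl).symm x) else 0) : E n)) ∘
          ⇑((swapNeg j l hjl : E n ≃ₗ[ℝ] E n) : E n →ₗ[ℝ] E n))) :=
      IsTame.comp (IsTame.linear _ (det_symm _ (det_swapNeg j l hjl)))
        (IsTame.comp hTt (IsTame.linear _ (det_swapNeg j l hjl)))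
    apply tame_congr hc
    intro x
    ext i
    simp only [Function.comp_apply, LinearEquiv.coe_coe, LinearEquiv.symm_apply_apply]
    by_cases h1 : i = j
    · subst h1
      simp [hjl, Ne.symm hjl]
      try ring
    · by_cases h2 : i = l
      · subst h2
        simp [hjl, Ne.symm hjl, h1]
        try ring
      · simp [h1, h2]

end Shear
section MultiShear

variable {n : ℕ}

lemma tame_multi_shear (c : Fin n → Prop) [DecidablePred c] (φ : E n → E n)
    (hφ : ∀ i, ∃ K : NNReal, LipschitzWith K (fun x => φ x i))
    (hdep : ∀ x y : E n, (∀ i, ¬ c i → x i = y i) → φ x = φ y)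
    (hsupp : ∀ (x : E n) (i : Fin n), ¬ c i → φ x i = 0) :
    IsTame n (fun x => (WithLp.toLp 2 (fun i => x i + φ x i) : E n)) := by
  classical
  suffices h : ∀ t : Finset (Fin n), (∀ i ∈ t, c i) →
      IsTame n (fun x => (WithLp.toLp 2 (fun i => x i + if i ∈ t then φ x i else 0) : E n)) by
    have h2 := h (Finset.univ.filter c) (fun i hi => (Finset.mem_filter.mp hi).2)
    apply tame_congr h2
    intro x
    ext i
    by_cases hc : c i
    · simp [hc]
    · simp [hc, hsupp x i hc]
  intro t
  induction t using Finset.induction_on with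
  | empty =>
    intro _
    apply tame_congr (tame_id (n := n))
    intro x; ext i; simp
  | @insert j t' hj ih =>
    intro ht
    have hct' : ∀ i ∈ t', c i := fun i hi => ht i (Finset.mem_insert_of_mem hi)
    have hcj : c j := ht j (Finset.mem_insert_self j t')
    have hG := ih hct'
    set G : E n → E n := fun x => (WithLp.toLp 2 (fun i => x i + if i ∈ t' then φ x i else 0) : E n) with hGdef
    have hGfix : ∀ (x : E n) (i : Fin n), ¬ c i → G x i = x i := by
      intro x i hi
      have : i ∉ t' := fun hmem => hi (hct' i hmem)
      simp [hGdef, this]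
    have hφG : ∀ x, φ (G x) = φ x := by
      intro x
      apply hdep
      intro i hi
      exact hGfix x i hi
    have hS := tame_single_shear j (fun x => φ x j) (hφ j) ?_
    · have hcomp := IsTame.comp hS hG
      apply tame_congr hcomp
      intro x
      ext i
      simp only [Function.comp_apply]
      by_cases hij : i = j
      · subst hij
        rw [if_pos rfl, if_pos (Finset.mem_insert_self i t')]
        simp only [hGdef]
        rw [if_neg hj, hφG, add_zero]
      · rw [if_neg hij]
        by_cases hit : i ∈ t'
        · rw [if_pos (Finset.mem_insert_of_mem hit)]
          simp only [hGdef]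
          rw [if_pos hit, add_zero]
        · rw [if_neg (by simp [hij, hit])]
          simp [hGdef, hit, hij]
    · intro x y hxy
      have hg : ∀ i, ¬ c i → x i = y i := by
        intro i hi
        apply hxy
        intro he
        subst he
        exact hi hcj
      show φ x j = φ y j
      rw [hdep x y hg]

/-- shears are bijective with explicit inverse and globally bi-Lipschitz -/
lemma bilip_of_inverse (F G : E n → E n) (hFG : ∀ x, G (F x) = x) (hGF : ∀ x, F (G x) = x)
    (hF : ∃ K : NNReal, LipschitzWith K F) (hG : ∃ K : NNReal, LipschitzWith K G) :
    Function.Bijective F ∧ IsBiLipschitzOn F (univ : Set (E n)) := by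
  obtain ⟨KF, hKF⟩ := hF
  obtain ⟨KG, hKG⟩ := hG
  constructor
  · exact Function.bijective_iff_has_inverse.mpr ⟨G, hFG, hGF⟩
  · refine ⟨1 + KF + KG, by
      have h1 := KF.coe_nonneg
      have h2 := KG.coe_nonneg
      linarith, ?_⟩
    intro x _ y _
    constructor
    · calc dist x y = dist (G (F x)) (G (F y)) := by rw [hFG, hFG]
        _ ≤ KG * dist (F x) (F y) := hKG.dist_le_mul _ _
        _ ≤ (1 + KF + KG) * dist (F x) (F y) := by
            apply mul_le_mul_of_nonneg_right _ dist_nonneg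
            have : (0:ℝ) ≤ KF := KF.coe_nonneg
            linarith
    · calc dist (F x) (F y) ≤ KF * dist x y := hKF.dist_le_mul _ _
        _ ≤ (1 + KF + KG) * dist x y := by
            apply mul_le_mul_of_nonneg_right _ dist_nonneg
            have : (0:ℝ) ≤ KG := KG.coe_nonneg
            linarith

lemma shear_lips (φ : E n → E n) (F : E n → E n)
    (hF : ∀ (x : E n) (i : Fin n), F x i = x i + φ x i)
    (hφ : ∀ i, ∃ K : NNReal, LipschitzWith K (fun x => φ x i)) :
    ∃ K : NNReal, LipschitzWith K F := by
  apply lipschitz_of_coords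
  intro i
  obtain ⟨K, hK⟩ := hφ i
  refine ⟨1 + K, ?_⟩
  have : (fun x => F x i) = fun x : E n => x i + φ x i := by
    funext x; exact hF x i
  rw [this]
  simpa using (eval_lips (n := n) i).add hK

end MultiShear

section Extend

variable {n : ℕ}

/-- extension of Lipschitz-on maps supported on coordinates satisfying c -/
lemma extend_aux (c : Fin n → Prop) [DecidablePred c] (s : Set (E n)) (g : E n → E n)
    (K : NNReal) (hg : LipschitzOnWith K g s)
    (hc : ∀ x ∈ s, ∀ i, ¬ c i → g x i = 0) :
    ∃ g' : E n → E n, (∀ i, ∃ K' : NNReal, LipschitzWith K' (fun x => g' x i)) ∧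
      Set.EqOn g' g s ∧ (∀ (x : E n) (i : Fin n), ¬ c i → g' x i = 0) := by
  classical
  have hext : ∀ i : Fin n, ∃ p : E n → ℝ, LipschitzWith (1 * K) p ∧
      EqOn (fun x => g x i) p s :=
    fun i => ((eval_lips i).comp_lipschitzOnWith hg).extend_real
  choose p hp hpeq using hext
  refine ⟨fun x => (WithLp.toLp 2 (fun i => if c i then p i x else 0) : E n), ?_, ?_, ?_⟩
  · intro i
    by_cases hci : c i
    · exact ⟨1 * K, by simpa [hci] using hp i⟩
    · exact ⟨0, by simpa [hci] using LipschitzWith.const' (0:ℝ) (K := 0)⟩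
  · intro x hx
    ext i
    by_cases hci : c i
    · simp only [if_pos hci]
      exact (hpeq i hx).symm
    · simp only [if_neg hci]
      exact (hc x hx i hci).symm
  · intro x i hci
    simp [hci]

end Extend
section Adapted

variable {n : ℕ}

def scaleCoord (k : Fin n) (c : ℝ) (hc : c ≠ 0) : E n ≃ₗ[ℝ] E n where
  toFun x := (WithLp.toLp 2 (fun i => (if i = k then c else 1) * x i) : E n)
  invFun x := (WithLp.toLp 2 (fun i => (if i = k then c⁻¹ else 1) * x i) : E n)
  map_add' x y := by
    ext i; simp only [PiLp.add_apply]; ring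
  map_smul' a x := by
    ext i; simp only [PiLp.smul_apply, RingHom.id_apply, smul_eq_mul]; ring
  left_inv x := by
    ext i
    dsimp only
    by_cases h : i = k
    · rw [if_pos h, if_pos h, ← mul_assoc, inv_mul_cancel₀ hc, one_mul]
    · rw [if_neg h, if_neg h, one_mul, one_mul]
  right_inv x := by
    ext i
    dsimp only
    by_cases h : i = k
    · rw [if_pos h, if_pos h, ← mul_assoc, mul_inv_cancel₀ hc, one_mul]
    · rw [if_neg h, if_neg h, one_mul, one_mul]

@[simp] lemma scaleCoord_apply (k : Fin n) (c : ℝ) (hc : c ≠ 0) (x : E n) (i : Fin n) :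
    scaleCoord k c hc x i = (if i = k then c else 1) * x i := rfl

lemma det_scaleCoord (k : Fin n) (c : ℝ) (hc : c ≠ 0) :
    LinearMap.det ((scaleCoord k c hc : E n ≃ₗ[ℝ] E n) : E n →ₗ[ℝ] E n) = c := by
  classical
  set b := PiLp.basisFun 2 ℝ (Fin n) with hb
  rw [← LinearMap.det_toMatrix b]
  have hM : LinearMap.toMatrix b b ((scaleCoord k c hc : E n ≃ₗ[ℝ] E n) : E n →ₗ[ℝ] E n)
      = Matrix.diagonal (fun i => if i = k then c else 1) := by
    ext i m
    rw [LinearMap.toMatrix_apply]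
    have hbk : ∀ j : Fin n, b m j = if j = m then 1 else 0 := by
      intro j; simp [hb, PiLp.basisFun_apply, Pi.single_apply]
    have hrepr : ∀ z : E n, b.repr z i = z i := by intro z; simp [hb]
    rw [hrepr]
    simp only [LinearEquiv.coe_coe, scaleCoord_apply, Matrix.diagonal_apply, hbk]
    by_cases him : i = m <;> simp [him]
  rw [hM, Matrix.det_diagonal]
  rw [Finset.prod_ite_eq' Finset.univ k (fun _ => c)]
  simp

lemma exists_adapted (c : Fin n → Prop) [DecidablePred c] (W : Submodule ℝ (E n))
    (hW : Module.finrank ℝ W = Fintype.card {i // c i}) :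
    ∃ A : E n ≃ₗ[ℝ] E n, LinearMap.det ((A : E n ≃ₗ[ℝ] E n) : E n →ₗ[ℝ] E n) = 1 ∧
      ∀ x ∈ W, ∀ i : Fin n, ¬ c i → A x i = 0 := by
  classical
  rcases Nat.eq_zero_or_pos n with hn | hn
  · refine ⟨LinearEquiv.refl ℝ (E n), by simp, ?_⟩
    intro x _ i _
    exact absurd i.isLt (by omega)
  · have hcard : Fintype.card {i // c i} + Fintype.card {i // ¬ c i} = n := by
      have h1 := Fintype.card_subtype_compl c
      have h2 : Fintype.card {i // c i} ≤ n := by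
        have := Fintype.card_subtype_le c
        simpa using this
      simp only [Fintype.card_fin] at h1
      omega
    have hrk := Submodule.finrank_add_finrank_orthogonal W
    rw [finrank_euclideanSpace_fin] at hrk
    have hWp : Module.finrank ℝ Wᗮ = Fintype.card {i // ¬ c i} := by omega
    set e₁ : {i // c i} ≃ Fin (Module.finrank ℝ W) := Fintype.equivFinOfCardEq hW.symm with he₁
    set e₂ : {i // ¬ c i} ≃ Fin (Module.finrank ℝ Wᗮ) := Fintype.equivFinOfCardEq hWp.symm
      with he₂
    set w₁ := stdOrthonormalBasis ℝ W with hw₁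
    set w₂ := stdOrthonormalBasis ℝ Wᗮ with hw₂
    set v : Fin n → E n := fun i =>
      if h : c i then (w₁ (e₁ ⟨i, h⟩) : E n) else (w₂ (e₂ ⟨i, h⟩) : E n) with hv
    have hvW : ∀ i, c i → v i ∈ W := by
      intro i h; simp only [hv, dif_pos h]; exact SetLike.coe_mem _
    have hvWp : ∀ i, ¬ c i → v i ∈ Wᗮ := by
      intro i h; simp only [hv, dif_neg h]; exact SetLike.coe_mem _
    have hon : Orthonormal ℝ v := by
      rw [orthonormal_iff_ite]
      intro i j
      by_cases hi : c i <;> by_cases hj : c j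
      · have h1 := orthonormal_iff_ite.mp w₁.orthonormal (e₁ ⟨i, hi⟩) (e₁ ⟨j, hj⟩)
        simp only [hv, dif_pos hi, dif_pos hj]
        rw [← Submodule.coe_inner, h1]
        have : (e₁ ⟨i, hi⟩ = e₁ ⟨j, hj⟩) ↔ i = j := by
          rw [Equiv.apply_eq_iff_eq]
          exact ⟨fun h => congrArg Subtype.val h, fun h => Subtype.ext h⟩
        by_cases hij : i = j
        · rw [if_pos (this.mpr hij), if_pos hij]
        · rw [if_neg (fun hc' => hij (this.mp hc')), if_neg hij]
      · have hij : i ≠ j := fun h => hj (h ▸ hi)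
        rw [if_neg hij]
        exact Submodule.inner_right_of_mem_orthogonal (hvW i hi) (hvWp j hj)
      · have hij : i ≠ j := fun h => hi (h ▸ hj)
        rw [if_neg hij]
        exact Submodule.inner_left_of_mem_orthogonal (hvW j hj) (hvWp i hi)
      · have h1 := orthonormal_iff_ite.mp w₂.orthonormal (e₂ ⟨i, hi⟩) (e₂ ⟨j, hj⟩)
        simp only [hv, dif_neg hi, dif_neg hj]
        rw [← Submodule.coe_inner, h1]
        have : (e₂ ⟨i, hi⟩ = e₂ ⟨j, hj⟩) ↔ i = j := by
          rw [Equiv.apply_eq_iff_eq]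
          exact ⟨fun h => congrArg Subtype.val h, fun h => Subtype.ext h⟩
        by_cases hij : i = j
        · rw [if_pos (this.mpr hij), if_pos hij]
        · rw [if_neg (fun hc' => hij (this.mp hc')), if_neg hij]
    have : Nonempty (Fin n) := ⟨⟨0, hn⟩⟩
    have hspan : ⊤ ≤ Submodule.span ℝ (Set.range v) := by
      rw [hon.linearIndependent.span_eq_top_of_card_eq_finrank (by simp)]
    set ob := OrthonormalBasis.mk hon hspan with hob
    set A₀ := ob.repr with hA₀def
    have hA₀ : ∀ x ∈ W, ∀ i : Fin n, ¬ c i → A₀ x i = 0 := by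
      intro x hx i hi
      rw [hA₀def, OrthonormalBasis.repr_apply_apply]
      have hmem : ob i ∈ Wᗮ := by
        have : ob i = v i := by rw [hob, OrthonormalBasis.coe_mk]
        rw [this]
        exact hvWp i hi
      rw [real_inner_comm]
      exact Submodule.inner_right_of_mem_orthogonal hx hmem
    set c₀ := LinearMap.det ((A₀.toLinearEquiv : E n ≃ₗ[ℝ] E n) : E n →ₗ[ℝ] E n) with hc₀def
    have hc₀ : c₀ ≠ 0 := (LinearEquiv.isUnit_det' A₀.toLinearEquiv).ne_zero
    refine ⟨A₀.toLinearEquiv.trans (scaleCoord ⟨0, hn⟩ c₀⁻¹ (inv_ne_zero hc₀)), ?_, ?_⟩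
    · have hcoe : ((A₀.toLinearEquiv.trans (scaleCoord ⟨0, hn⟩ c₀⁻¹ (inv_ne_zero hc₀))
          : E n ≃ₗ[ℝ] E n) : E n →ₗ[ℝ] E n)
          = ((scaleCoord ⟨0, hn⟩ c₀⁻¹ (inv_ne_zero hc₀) : E n ≃ₗ[ℝ] E n) : E n →ₗ[ℝ] E n) ∘ₗ
            ((A₀.toLinearEquiv : E n ≃ₗ[ℝ] E n) : E n →ₗ[ℝ] E n) := rfl
      rw [hcoe, LinearMap.det_comp, det_scaleCoord, ← hc₀def, inv_mul_cancel₀ hc₀]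
    · intro x hx i hi
      have : A₀.toLinearEquiv.trans (scaleCoord ⟨0, hn⟩ c₀⁻¹ (inv_ne_zero hc₀)) x
          = scaleCoord ⟨0, hn⟩ c₀⁻¹ (inv_ne_zero hc₀) (A₀ x) := rfl
      rw [this, scaleCoord_apply, hA₀ x hx i hi, mul_zero]

end Adapted

/-- A bi-Lipschitz homeomorphism between closed sets lying in complementary-dimension
linear subspaces extends to a tame bi-Lipschitz homeomorphism of ℝⁿ. -/
theorem stmt_5 (n s : ℕ) (L H : Submodule ℝ (E n))
    (hL : Module.finrank ℝ L = s) (hH : Module.finrank ℝ H = n - s)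
    (X Y : Set (E n)) (hXc : IsClosed X) (hYc : IsClosed Y)
    (hXL : X ⊆ (L : Set (E n))) (hYH : Y ⊆ (H : Set (E n)))
    (f : E n → E n) (hfY : f '' X = Y) (hbi : IsBiLipschitzOn f X) :
    ∃ F : E n → E n, IsTame n F ∧ Function.Bijective F ∧
      IsBiLipschitzOn F (univ : Set (E n)) ∧ Set.EqOn F f X := by
  classical
  obtain ⟨C, hC1, hC⟩ := hbi
  have hCnn : (0:ℝ) ≤ C := le_trans zero_le_one hC1
  have hsn : s ≤ n := by
    have h1 := Submodule.finrank_le L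
    rw [hL, finrank_euclideanSpace_fin] at h1
    exact h1
  have hcard1 : Fintype.card {i : Fin n // (i : ℕ) < s} = s := by
    have he : {i : Fin n // (i : ℕ) < s} ≃ Fin s :=
      { toFun := fun a => ⟨(a.1 : ℕ), a.2⟩
        invFun := fun b => ⟨⟨b.1, lt_of_lt_of_le b.2 hsn⟩, b.2⟩
        left_inv := fun a => Subtype.ext (Fin.ext rfl)
        right_inv := fun b => Fin.ext rfl }
    rw [Fintype.card_congr he, Fintype.card_fin]
  have hcard2 : Fintype.card {i : Fin n // ¬ (i : ℕ) < s} = n - s := by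
    have h1 := Fintype.card_subtype_compl (fun i : Fin n => (i : ℕ) < s)
    rw [hcard1, Fintype.card_fin] at h1
    exact h1
  obtain ⟨A, hAdet, hAzero⟩ :=
    exists_adapted (fun i : Fin n => (i : ℕ) < s) L (by rw [hL, hcard1])
  obtain ⟨B, hBdet, hBzero⟩ :=
    exists_adapted (fun i : Fin n => ¬ (i : ℕ) < s) H (by rw [hH, hcard2])
  obtain ⟨KA, hKA⟩ := linear_lips ((A : E n ≃ₗ[ℝ] E n) : E n →ₗ[ℝ] E n)
  obtain ⟨KAs, hKAs⟩ := linear_lips ((A.symm : E n ≃ₗ[ℝ] E n) : E n →ₗ[ℝ] E n)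
  obtain ⟨KB, hKB⟩ := linear_lips ((B : E n ≃ₗ[ℝ] E n) : E n →ₗ[ℝ] E n)
  obtain ⟨KBs, hKBs⟩ := linear_lips ((B.symm : E n ≃ₗ[ℝ] E n) : E n →ₗ[ℝ] E n)
  set X' : Set (E n) := A '' X with hX'def
  set g : E n → E n := fun u => B (f (A.symm u)) with hgdef
  have hgfact : ∀ x ∈ X, g (A x) = B (f x) := by
    intro x _
    rw [hgdef]
    simp
  -- membership facts
  have hfmemY : ∀ x ∈ X, f x ∈ Y := by
    intro x hx
    rw [← hfY]
    exact mem_image_of_mem f hx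
  have hX'supp : ∀ u ∈ X', ∀ i : Fin n, ¬ (i : ℕ) < s → u i = 0 := by
    rintro _ ⟨x, hx, rfl⟩ i hi
    exact hAzero x (hXL hx) i hi
  have hgsupp : ∀ u ∈ X', ∀ i : Fin n, (i : ℕ) < s → g u i = 0 := by
    rintro _ ⟨x, hx, rfl⟩ i hi
    rw [hgfact x hx]
    exact hBzero (f x) (hYH (hfmemY x hx)) i (not_not_intro hi)
  -- Lipschitz bounds for g
  have hgL : ∀ u ∈ X', ∀ v ∈ X', dist (g u) (g v) ≤ (KB : ℝ) * C * KAs * dist u v := by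
    rintro _ ⟨x, hx, rfl⟩ _ ⟨y, hy, rfl⟩
    rw [hgfact x hx, hgfact y hy]
    calc dist (B (f x)) (B (f y)) ≤ KB * dist (f x) (f y) := hKB.dist_le_mul _ _
      _ ≤ KB * (C * dist x y) :=
          mul_le_mul_of_nonneg_left (hC x hx y hy).2 KB.coe_nonneg
      _ ≤ KB * (C * (KAs * dist (A x) (A y))) := by
          apply mul_le_mul_of_nonneg_left _ KB.coe_nonneg
          apply mul_le_mul_of_nonneg_left _ hCnn
          have h2 : dist x y = dist (A.symm (A x)) (A.symm (A y)) := by simp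
          rw [h2]
          exact hKAs.dist_le_mul _ _
      _ = KB * C * KAs * dist (A x) (A y) := by ring
  have hganti : ∀ u ∈ X', ∀ v ∈ X', dist u v ≤ (KA : ℝ) * C * KBs * dist (g u) (g v) := by
    rintro _ ⟨x, hx, rfl⟩ _ ⟨y, hy, rfl⟩
    calc dist (A x) (A y) ≤ KA * dist x y := hKA.dist_le_mul _ _
      _ ≤ KA * (C * dist (f x) (f y)) :=
          mul_le_mul_of_nonneg_left (hC x hx y hy).1 KA.coe_nonneg
      _ ≤ KA * (C * (KBs * dist (g (A x)) (g (A y)))) := by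
          apply mul_le_mul_of_nonneg_left _ KA.coe_nonneg
          apply mul_le_mul_of_nonneg_left _ hCnn
          have h2 : ∀ z ∈ X, f z = B.symm (g (A z)) := by
            intro z hz
            rw [hgfact z hz]
            simp
          rw [h2 x hx, h2 y hy]
          exact hKBs.dist_le_mul _ _
      _ = KA * C * KBs * dist (g (A x)) (g (A y)) := by ring
  have hginj : Set.InjOn g X' := by
    intro u hu v hv he
    have h1 := hganti u hu v hv
    rw [he, dist_self, mul_zero] at h1
    exact dist_le_zero.mp h1
  -- extension of g
  have hgLW : LipschitzOnWith (KB * C.toNNReal * KAs) g X' := by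
    apply LipschitzOnWith.of_dist_le_mul
    intro u hu v hv
    have hco : ((KB * C.toNNReal * KAs : NNReal) : ℝ) = (KB : ℝ) * C * KAs := by
      push_cast [Real.coe_toNNReal C hCnn]
      ring
    rw [hco]
    exact hgL u hu v hv
  obtain ⟨g', hg'lip, hg'eq, hg'supp⟩ :=
    extend_aux (fun i : Fin n => ¬ (i : ℕ) < s) X' g _ hgLW
      (fun u hu i hi => hgsupp u hu i (not_not.mp hi))
  set π₁ : E n → E n := projC (fun i : Fin n => (i : ℕ) < s) with hπ₁def
  have hπ₁fix : ∀ u ∈ X', π₁ u = u := fun u hu => projC_eq_self (hX'supp u hu)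
  obtain ⟨Kπ₁, hKπ₁⟩ := projC_lips (fun i : Fin n => (i : ℕ) < s)
  set φ : E n → E n := fun x => g' (π₁ x) with hφdef
  have hφlip : ∀ i, ∃ K : NNReal, LipschitzWith K (fun x => φ x i) := by
    intro i
    obtain ⟨K, hK⟩ := hg'lip i
    exact ⟨K * Kπ₁, hK.comp hKπ₁⟩
  have hφzero : ∀ (x : E n) (i : Fin n), (i : ℕ) < s → φ x i = 0 := by
    intro x i hi
    exact hg'supp (π₁ x) i (not_not_intro hi)
  have hφdep : ∀ x y : E n, (∀ i : Fin n, (i : ℕ) < s → x i = y i) → φ x = φ y := by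
    intro x y h
    have hpi : π₁ x = π₁ y := by
      ext i
      show (if (i : ℕ) < s then x i else 0) = (if (i : ℕ) < s then y i else 0)
      by_cases hi : (i : ℕ) < s
      · rw [if_pos hi, if_pos hi, h i hi]
      · rw [if_neg hi, if_neg hi]
    show g' (π₁ x) = g' (π₁ y)
    rw [hpi]
  have hφeq : ∀ u ∈ X', φ u = g u := by
    intro u hu
    rw [hφdef]
    show g' (π₁ u) = g u
    rw [hπ₁fix u hu]
    exact hg'eq hu
  set S1 : E n → E n := fun x => (WithLp.toLp 2 (fun i => x i + φ x i) : E n) with hS1def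
  have hS1tame : IsTame n S1 :=
    tame_multi_shear (fun i : Fin n => ¬ (i : ℕ) < s) φ hφlip
      (fun x y h => hφdep x y (fun i hi => h i (not_not_intro hi)))
      (fun x i hi => hφzero x i (not_not.mp hi))
  -- inverse side
  have hne : Nonempty (E n) := ⟨0⟩
  set Y' : Set (E n) := g '' X' with hY'def
  set ψ₀ : E n → E n := Function.invFunOn g X' with hψ₀def
  have hψinv : ∀ u ∈ X', ψ₀ (g u) = u := by
    intro u hu
    have h1 : ψ₀ (g u) ∈ X' := Function.invFunOn_mem ⟨u, hu, rfl⟩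
    have h2 : g (ψ₀ (g u)) = g u := Function.invFunOn_eq ⟨u, hu, rfl⟩
    exact hginj h1 hu h2
  have hψLW : LipschitzOnWith (KA * C.toNNReal * KBs) ψ₀ Y' := by
    apply LipschitzOnWith.of_dist_le_mul
    rintro _ ⟨u, hu, rfl⟩ _ ⟨v, hv, rfl⟩
    rw [hψinv u hu, hψinv v hv]
    have hco : ((KA * C.toNNReal * KBs : NNReal) : ℝ) = (KA : ℝ) * C * KBs := by
      push_cast [Real.coe_toNNReal C hCnn]
      ring
    rw [hco]
    exact hganti u hu v hv
  obtain ⟨ψ', hψ'lip, hψ'eq, hψ'supp⟩ :=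
    extend_aux (fun i : Fin n => (i : ℕ) < s) Y' ψ₀ _ hψLW
      (by
        rintro _ ⟨u, hu, rfl⟩ i hi
        rw [hψinv u hu]
        exact hX'supp u hu i hi)
  set π₂ : E n → E n := projC (fun i : Fin n => ¬ (i : ℕ) < s) with hπ₂def
  have hπ₂fix : ∀ y ∈ Y', π₂ y = y := by
    rintro _ ⟨u, hu, rfl⟩
    exact projC_eq_self (fun i hi => hgsupp u hu i (not_not.mp hi))
  obtain ⟨Kπ₂, hKπ₂⟩ := projC_lips (fun i : Fin n => ¬ (i : ℕ) < s)
  set φ₂ : E n → E n := fun x => (WithLp.toLp 2 (fun i => -(ψ' (π₂ x) i)) : E n) with hφ₂def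
  have hφ₂lip : ∀ i, ∃ K : NNReal, LipschitzWith K (fun x => φ₂ x i) := by
    intro i
    obtain ⟨K, hK⟩ := hψ'lip i
    exact ⟨K * Kπ₂, lips_neg (hK.comp hKπ₂)⟩
  have hφ₂zero : ∀ (x : E n) (i : Fin n), ¬ (i : ℕ) < s → φ₂ x i = 0 := by
    intro x i hi
    show -(ψ' (π₂ x) i) = 0
    rw [hψ'supp (π₂ x) i hi, neg_zero]
  have hφ₂dep : ∀ x y : E n, (∀ i : Fin n, ¬ (i : ℕ) < s → x i = y i) → φ₂ x = φ₂ y := by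
    intro x y h
    have hpi : π₂ x = π₂ y := by
      ext i
      show (if ¬ (i : ℕ) < s then x i else 0) = (if ¬ (i : ℕ) < s then y i else 0)
      by_cases hi : ¬ (i : ℕ) < s
      · rw [if_pos hi, if_pos hi, h i hi]
      · rw [if_neg hi, if_neg hi]
    show (WithLp.toLp 2 (fun i => -(ψ' (π₂ x) i)) : E n) = (WithLp.toLp 2 (fun i => -(ψ' (π₂ y) i)) : E n)
    rw [hpi]
  set S2 : E n → E n := fun x => (WithLp.toLp 2 (fun i => x i + φ₂ x i) : E n) with hS2def
  have hS2tame : IsTame n S2 :=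
    tame_multi_shear (fun i : Fin n => (i : ℕ) < s) φ₂ hφ₂lip
      (fun x y h => hφ₂dep x y h) (fun x i hi => hφ₂zero x i hi)
  -- shear inverses
  set T1 : E n → E n := fun x => (WithLp.toLp 2 (fun i => x i + (-(φ x i))) : E n) with hT1def
  set T2 : E n → E n := fun x => (WithLp.toLp 2 (fun i => x i + (-(φ₂ x i))) : E n) with hT2def
  have hφS1 : ∀ x, φ (S1 x) = φ x := by
    intro x
    apply hφdep
    intro i hi
    show x i + φ x i = x i
    rw [hφzero x i hi, add_zero]
  have hφT1 : ∀ x, φ (T1 x) = φ x := by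
    intro x
    apply hφdep
    intro i hi
    show x i + (-(φ x i)) = x i
    rw [hφzero x i hi, neg_zero, add_zero]
  have hφ₂S2 : ∀ x, φ₂ (S2 x) = φ₂ x := by
    intro x
    apply hφ₂dep
    intro i hi
    show x i + φ₂ x i = x i
    rw [hφ₂zero x i hi, add_zero]
  have hφ₂T2 : ∀ x, φ₂ (T2 x) = φ₂ x := by
    intro x
    apply hφ₂dep
    intro i hi
    show x i + (-(φ₂ x i)) = x i
    rw [hφ₂zero x i hi, neg_zero, add_zero]
  have hT1S1 : ∀ x, T1 (S1 x) = x := by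
    intro x
    ext i
    show S1 x i + (-(φ (S1 x) i)) = x i
    rw [hφS1]
    show (x i + φ x i) + (-(φ x i)) = x i
    ring
  have hS1T1 : ∀ x, S1 (T1 x) = x := by
    intro x
    ext i
    show T1 x i + φ (T1 x) i = x i
    rw [hφT1]
    show (x i + (-(φ x i))) + φ x i = x i
    ring
  have hT2S2 : ∀ x, T2 (S2 x) = x := by
    intro x
    ext i
    show S2 x i + (-(φ₂ (S2 x) i)) = x i
    rw [hφ₂S2]
    show (x i + φ₂ x i) + (-(φ₂ x i)) = x i
    ring
  have hS2T2 : ∀ x, S2 (T2 x) = x := by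
    intro x
    ext i
    show T2 x i + φ₂ (T2 x) i = x i
    rw [hφ₂T2]
    show (x i + (-(φ₂ x i))) + φ₂ x i = x i
    ring
  -- global Lipschitz bounds
  obtain ⟨KS1, hKS1⟩ := shear_lips φ S1 (fun x i => rfl) hφlip
  obtain ⟨KS2, hKS2⟩ := shear_lips φ₂ S2 (fun x i => rfl) hφ₂lip
  obtain ⟨KT1, hKT1⟩ := shear_lips (fun x => (WithLp.toLp 2 (fun i => -(φ x i)) : E n)) T1 (fun x i => rfl)
    (fun i => (hφlip i).imp (fun K hK => lips_neg hK))
  obtain ⟨KT2, hKT2⟩ := shear_lips (fun x => (WithLp.toLp 2 (fun i => -(φ₂ x i)) : E n)) T2 (fun x i => rfl)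
    (fun i => (hφ₂lip i).imp (fun K hK => lips_neg hK))
  -- the final map
  set F : E n → E n := fun x => B.symm (S2 (S1 (A x))) with hFdef
  set G : E n → E n := fun y => A.symm (T1 (T2 (B y))) with hGdef
  have hFtame : IsTame n F := by
    have hcomp := IsTame.comp
      (IsTame.linear ((B.symm : E n ≃ₗ[ℝ] E n) : E n →ₗ[ℝ] E n) (det_symm B hBdet))
      (IsTame.comp hS2tame (IsTame.comp hS1tame
        (IsTame.linear ((A : E n ≃ₗ[ℝ] E n) : E n →ₗ[ℝ] E n) hAdet)))
    apply tame_congr hcomp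
    intro x
    rfl
  have hFG : ∀ x, G (F x) = x := by
    intro x
    show A.symm (T1 (T2 (B (B.symm (S2 (S1 (A x))))))) = x
    rw [LinearEquiv.apply_symm_apply, hT2S2, hT1S1, LinearEquiv.symm_apply_apply]
  have hGF : ∀ x, F (G x) = x := by
    intro x
    show B.symm (S2 (S1 (A (A.symm (T1 (T2 (B x))))))) = x
    rw [LinearEquiv.apply_symm_apply, hS1T1, hS2T2, LinearEquiv.symm_apply_apply]
  have hFlip : ∃ K : NNReal, LipschitzWith K F := by
    refine ⟨KBs * (KS2 * (KS1 * KA)), ?_⟩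
    exact (hKBs.comp (hKS2.comp (hKS1.comp hKA)) : _)
  have hGlip : ∃ K : NNReal, LipschitzWith K G := by
    refine ⟨KAs * (KT1 * (KT2 * KB)), ?_⟩
    exact (hKAs.comp (hKT1.comp (hKT2.comp hKB)) : _)
  obtain ⟨hFbij, hFbilip⟩ := bilip_of_inverse F G hFG hGF hFlip hGlip
  refine ⟨F, hFtame, hFbij, hFbilip, ?_⟩
  intro x hx
  have hu : A x ∈ X' := mem_image_of_mem _ hx
  have hφu : φ (A x) = g (A x) := hφeq (A x) hu
  have hguY' : g (A x) ∈ Y' := mem_image_of_mem g hu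
  have hρ : π₂ (S1 (A x)) = g (A x) := by
    ext i
    show (if ¬ (i : ℕ) < s then S1 (A x) i else 0) = g (A x) i
    by_cases hi : (i : ℕ) < s
    · rw [if_neg (not_not_intro hi), hgsupp (A x) hu i hi]
    · rw [if_pos hi]
      show A x i + φ (A x) i = g (A x) i
      rw [hφu, hX'supp (A x) hu i hi, zero_add]
  have hψρ : ψ' (π₂ (S1 (A x))) = A x := by
    rw [hρ, hψ'eq hguY', hψinv (A x) hu]
  have h2 : S2 (S1 (A x)) = g (A x) := by
    ext i
    show S1 (A x) i + (-(ψ' (π₂ (S1 (A x))) i)) = g (A x) i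
    rw [hψρ]
    show (A x i + φ (A x) i) + (-(A x i)) = g (A x) i
    rw [hφu]
    ring
  show B.symm (S2 (S1 (A x))) = f x
  rw [h2, hgfact x hx, LinearEquiv.symm_apply_apply]
end
end
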